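/- For all integers n ≥ 1, m ≥ 0, k ≥ 1: Σ over all (k₀,...,k_m) of nonnegative integers with k₀+⋯+k_m = k of Π_{i=0}^m max((n+i)^{k_i - 1}, 1) ≤ 3^k·(m+1)·(n+m)^{k-1}. Here when k_i = 0 the factor max((n+i)^{-1},1) is interpreted as 1. -/

import Mathlib

open Finset

lemma AT_succ_eq (p k : ℕ) :
    Finset.Nat.antidiagonalTuple (p+1) k =
      (Finset.HasAntidiagonal.antidiagonal k).biUnion
        (fun ab => (Finset.Nat.antidiagonalTuple p ab.2).image (Fin.cons ab.1)) := by
  ext f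
  simp only [Finset.mem_biUnion, Finset.mem_image, Finset.HasAntidiagonal.mem_antidiagonal,
    Finset.Nat.mem_antidiagonalTuple, Prod.exists]
  constructor
  · intro h
    exact ⟨f 0, ∑ i : Fin p, f i.succ, by rw [← h, Fin.sum_univ_succ], Fin.tail f,
      by simp [Fin.tail], Fin.cons_self_tail f⟩
  · rintro ⟨a, b, hab, g, hg, rfl⟩
    rw [Fin.sum_cons, hg, hab]

lemma sum_AT_succ (p k : ℕ) (g : (Fin (p+1) → ℕ) → ℝ) :
    ∑ f ∈ Finset.Nat.antidiagonalTuple (p+1) k, g f =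
      ∑ ab ∈ Finset.HasAntidiagonal.antidiagonal k, ∑ t ∈ Finset.Nat.antidiagonalTuple p ab.2,
        g (Fin.cons ab.1 t) := by
  rw [AT_succ_eq, Finset.sum_biUnion]
  · exact Finset.sum_congr rfl fun ab _ => Finset.sum_image
      (fun a _ b _ h => Fin.cons_right_injective _ h)
  · intro ab _ cd _ hne
    simp only [Finset.disjoint_left, Finset.mem_image]
    rintro f ⟨t, ht, rfl⟩ ⟨s, hs, hcs⟩
    apply hne
    have h0 : ab.1 = cd.1 := by
      have := congrFun hcs 0
      simpa using this.symm
    have hst : s = t := by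
      have := congrArg Fin.tail hcs
      simpa [Fin.tail_cons] using this
    have h1 : ab.2 = cd.2 := by
      rw [Finset.Nat.mem_antidiagonalTuple] at ht hs
      rw [← ht, ← hs, hst]
    exact Prod.ext h0 h1

lemma aux_bound (x : ℝ) (hx1 : 1 ≤ x) :
    ∀ p k : ℕ, 1 ≤ k → (p : ℝ) ≤ x →
      ∑ f ∈ Finset.Nat.antidiagonalTuple p k, x ^ (∑ i, (f i - 1)) ≤
        2 ^ (k-1) * p * x ^ (k-1) := by
  intro p
  induction p with
  | zero =>
    intro k hk _
    obtain ⟨j, rfl⟩ : ∃ j, k = j + 1 := ⟨k - 1, (Nat.succ_pred_eq_of_pos hk).symm⟩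
    simp
  | succ p ih =>
    intro k hk hpx
    have hp : (p : ℝ) ≤ x := by
      refine le_trans ?_ hpx; push_cast; linarith
    obtain ⟨j, rfl⟩ : ∃ j, k = j + 1 := ⟨k - 1, (Nat.succ_pred_eq_of_pos hk).symm⟩
    have hx0 : (0:ℝ) ≤ x := le_trans zero_le_one hx1
    rw [show ((p+1:ℕ):ℝ) = (p:ℝ)+1 by push_cast; ring]
    rw [sum_AT_succ]
    have inner : ∀ ab : ℕ × ℕ,
        ∑ t ∈ Finset.Nat.antidiagonalTuple p ab.2,
            x ^ (∑ i : Fin (p+1), (Fin.cons ab.1 t i - 1)) =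
          x ^ (ab.1 - 1) * ∑ t ∈ Finset.Nat.antidiagonalTuple p ab.2,
            x ^ (∑ i : Fin p, (t i - 1)) := by
      intro ab
      rw [Finset.mul_sum]
      refine Finset.sum_congr rfl fun t _ => ?_
      rw [← pow_add]
      congr 1
      rw [Fin.sum_univ_succ]
      simp
    simp only [inner]
    rw [Finset.Nat.sum_antidiagonal_eq_sum_range_succ_mk]
    -- now : ∑ a ∈ range (j+2), x^(a-1) * F(p, j+1-a)
    rw [Finset.sum_range_succ, Finset.sum_range_succ']
    have hF0 : ∑ t ∈ Finset.Nat.antidiagonalTuple p (j + 1 - (j+1)), x ^ (∑ i : Fin p, (t i - 1))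
        = 1 := by
      simp [Finset.Nat.antidiagonalTuple_zero_right]
    have hlast : x ^ (j + 1 - 1) *
        (∑ t ∈ Finset.Nat.antidiagonalTuple p (j + 1 - (j+1)), x ^ (∑ i : Fin p, (t i - 1)))
        = x ^ j := by
      rw [hF0, mul_one]; norm_num
    have hfirst : x ^ (0 - 1) *
        (∑ t ∈ Finset.Nat.antidiagonalTuple p (j + 1 - 0), x ^ (∑ i : Fin p, (t i - 1)))
        ≤ 2 ^ j * p * x ^ j := by
      simpa using ih (j+1) (Nat.succ_le_succ (Nat.zero_le _)) hp
    have hmid : ∑ a ∈ Finset.range j,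
        x ^ (a + 1 - 1) *
          (∑ t ∈ Finset.Nat.antidiagonalTuple p (j + 1 - (a+1)), x ^ (∑ i : Fin p, (t i - 1)))
        ≤ (2 ^ j - 1) * x ^ j := by
      have hbound : ∀ a ∈ Finset.range j,
          x ^ (a + 1 - 1) *
            (∑ t ∈ Finset.Nat.antidiagonalTuple p (j + 1 - (a+1)), x ^ (∑ i : Fin p, (t i - 1)))
          ≤ 2 ^ (j - 1 - a) * x ^ j := by
        intro a ha
        rw [Finset.mem_range] at ha
        have hb1 : 1 ≤ j + 1 - (a+1) := by omega
        have h1 := ih (j + 1 - (a+1)) hb1 hp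
        have hxa : (0:ℝ) ≤ x ^ (a + 1 - 1) := by positivity
        calc x ^ (a + 1 - 1) *
            (∑ t ∈ Finset.Nat.antidiagonalTuple p (j + 1 - (a+1)), x ^ (∑ i : Fin p, (t i - 1)))
            ≤ x ^ (a + 1 - 1) * (2 ^ (j + 1 - (a+1) - 1) * p * x ^ (j + 1 - (a+1) - 1)) :=
              mul_le_mul_of_nonneg_left h1 hxa
          _ = 2 ^ (j - 1 - a) * (p * x ^ (j - 1)) := by
              rw [show a + 1 - 1 = a from rfl, show j + 1 - (a+1) - 1 = j - 1 - a by omega]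
              have hxx : x ^ a * x ^ (j - 1 - a) = x ^ (j - 1) := by
                rw [← pow_add]; congr 1; omega
              rw [← hxx]; ring
          _ ≤ 2 ^ (j - 1 - a) * x ^ j := by
              refine mul_le_mul_of_nonneg_left ?_ (by positivity)
              calc p * x ^ (j - 1) ≤ x * x ^ (j - 1) :=
                    mul_le_mul_of_nonneg_right hp (by positivity)
                _ = x ^ j := by
                    rw [← pow_succ']
                    congr 1
                    omega
      calc ∑ a ∈ Finset.range j,
          x ^ (a + 1 - 1) *
            (∑ t ∈ Finset.Nat.antidiagonalTuple p (j + 1 - (a+1)), x ^ (∑ i : Fin p, (t i - 1)))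
          ≤ ∑ a ∈ Finset.range j, 2 ^ (j - 1 - a) * x ^ j := Finset.sum_le_sum hbound
        _ = (∑ a ∈ Finset.range j, (2:ℝ) ^ (j - 1 - a)) * x ^ j := by rw [Finset.sum_mul]
        _ = (2 ^ j - 1) * x ^ j := by
            rw [Finset.sum_range_reflect (fun a => (2:ℝ) ^ a) j]
            rw [geom_sum_eq (by norm_num : (2:ℝ) ≠ 1) j]
            norm_num
    calc (∑ a ∈ Finset.range j,
          x ^ (a + 1 - 1) *
            (∑ t ∈ Finset.Nat.antidiagonalTuple p (j + 1 - (a+1)), x ^ (∑ i : Fin p, (t i - 1))))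
          + x ^ (0 - 1) *
            (∑ t ∈ Finset.Nat.antidiagonalTuple p (j + 1 - 0), x ^ (∑ i : Fin p, (t i - 1)))
          + x ^ (j + 1 - 1) *
            (∑ t ∈ Finset.Nat.antidiagonalTuple p (j + 1 - (j+1)), x ^ (∑ i : Fin p, (t i - 1)))
        ≤ (2 ^ j - 1) * x ^ j + 2 ^ j * p * x ^ j + x ^ j := by
          rw [hlast]
          exact add_le_add (add_le_add hmid hfirst) le_rfl
      _ = 2 ^ ((j+1) - 1) * ((p:ℝ) + 1) * x ^ ((j+1) - 1) := by
          rw [show (j+1) - 1 = j from rfl]; ring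

/-- For all integers `n ≥ 1`, `m ≥ 0`, `k ≥ 1`, the sum over all `(m+1)`-tuples
`(k₀,…,k_m)` of nonnegative integers with `k₀+⋯+k_m = k` of
`Π_{i=0}^m max((n+i)^{k_i-1}, 1)` is at most `3^k·(m+1)·(n+m)^{k-1}`
(the factor for `k_i = 0` being interpreted as `1`). -/
theorem stmt_7 (n m k : ℕ) (hn : 1 ≤ n) (hk : 1 ≤ k) :
    ∑ f ∈ Finset.Nat.antidiagonalTuple (m + 1) k,
        ∏ i : Fin (m + 1), max (((n + (i : ℕ) : ℕ) : ℝ) ^ (f i - 1)) 1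
      ≤ 3 ^ k * ((m : ℝ) + 1) * ((n : ℝ) + (m : ℝ)) ^ (k - 1) := by
  set x : ℝ := (n : ℝ) + (m : ℝ) with hxdef
  have hx1 : 1 ≤ x := by
    have : (1:ℝ) ≤ (n:ℝ) := by exact_mod_cast hn
    have : (0:ℝ) ≤ (m:ℝ) := Nat.cast_nonneg m
    unfold x; linarith [(show (1:ℝ) ≤ (n:ℝ) by exact_mod_cast hn)]
  have hx0 : (0:ℝ) ≤ x := le_trans zero_le_one hx1
  have step1 : ∑ f ∈ Finset.Nat.antidiagonalTuple (m + 1) k,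
        ∏ i : Fin (m + 1), max (((n + (i : ℕ) : ℕ) : ℝ) ^ (f i - 1)) 1
      ≤ ∑ f ∈ Finset.Nat.antidiagonalTuple (m + 1) k, x ^ (∑ i, (f i - 1)) := by
    refine Finset.sum_le_sum fun f _ => ?_
    rw [← Finset.prod_pow_eq_pow_sum]
    refine Finset.prod_le_prod (fun i _ => ?_) (fun i _ => ?_)
    · positivity
    · refine max_le ?_ ?_
      · refine pow_le_pow_left₀ (by positivity) ?_ _
        push_cast
        have := Fin.is_le i
        have : ((i:ℕ):ℝ) ≤ (m:ℝ) := by exact_mod_cast this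
        linarith
      · exact one_le_pow₀ hx1
  have step2 := aux_bound x hx1 (m + 1) k hk (by push_cast; linarith [(show (1:ℝ) ≤ (n:ℝ) by exact_mod_cast hn)])
  have step3 : (2:ℝ) ^ (k - 1) * ((m + 1 : ℕ) : ℝ) * x ^ (k - 1)
      ≤ 3 ^ k * ((m : ℝ) + 1) * x ^ (k - 1) := by
    have h23 : (2:ℝ) ^ (k - 1) ≤ 3 ^ k := by
      calc (2:ℝ) ^ (k - 1) ≤ 3 ^ (k - 1) := by
            exact pow_le_pow_left₀ (by norm_num) (by norm_num) _
        _ ≤ 3 ^ k := pow_le_pow_right₀ (by norm_num) (Nat.sub_le k 1)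
    have hm : ((m + 1 : ℕ) : ℝ) = (m : ℝ) + 1 := by push_cast; ring
    rw [hm]
    have hmn : (0:ℝ) ≤ (m : ℝ) + 1 := by positivity
    have hxp : (0:ℝ) ≤ x ^ (k - 1) := by positivity
    nlinarith [mul_le_mul_of_nonneg_right h23 hmn]
  exact le_trans step1 (le_trans step2 step3)
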